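/- Let R be a ring with unit and A a (not necessarily unital) associative ring. Let σ: R → M_A be a map with σ(0) = 0 and σ(1) = 1 (the identity bimultiplication), such that σ(x) and σ(y) are permutable for all x, y ∈ R, and let f, g: R × R → A be maps with f(x,0) = f(0,x) = 0, g(x,0) = g(0,x) = 0, g(x,1) = g(1,x) = 0, satisfying σ(x+y) − σ(x) − σ(y) = μ_{f(x,y)} and σ(xy) − σ(x)σ(y) = μ_{g(x,y)} in M_A for all x, y ∈ R. Then every value of the obstruction of (σ, f, g), i.e. each of the elements ζ(x,y,z), η(x,y), α(x,y,z), λ(x,y,z), ρ(x,y,z) for x, y, z ∈ R, lies in the bicenter C_A of A. -/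

import Mathlib

/-- A bimultiplication of a (not necessarily unital) associative ring `A`:
a pair of maps `a ↦ σa` (`left`) and `a ↦ aσ` (`right`) satisfying
`σ(a+b) = σa + σb`, `(a+b)σ = aσ + bσ`, `σ(ab) = (σa)b`, `(ab)σ = a(bσ)`
and `a(σb) = (aσ)b`. -/
structure Bimul (A : Type*) [NonUnitalRing A] where
  left : A → A
  right : A → A
  left_add : ∀ a b : A, left (a + b) = left a + left b
  right_add : ∀ a b : A, right (a + b) = right a + right b
  left_mul : ∀ a b : A, left (a * b) = left a * b
  right_mul : ∀ a b : A, right (a * b) = a * right b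
  middle : ∀ a b : A, a * left b = right a * b

namespace Bimul

variable {A : Type*} [NonUnitalRing A]

/-- The sum of two bimultiplications: `(σ+ν)a = σa + νa`, `a(σ+ν) = aσ + aν`. -/
instance : Add (Bimul A) :=
  ⟨fun σ ν =>
    { left := fun a => σ.left a + ν.left a
      right := fun a => σ.right a + ν.right a
      left_add := fun a b => by rw [σ.left_add, ν.left_add]; abel
      right_add := fun a b => by rw [σ.right_add, ν.right_add]; abel
      left_mul := fun a b => by rw [σ.left_mul, ν.left_mul, add_mul]
      right_mul := fun a b => by rw [σ.right_mul, ν.right_mul, mul_add]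
      middle := fun a b => by rw [mul_add, add_mul, σ.middle, ν.middle] }⟩

/-- The product of two bimultiplications: `(σν)a = σ(νa)`, `a(σν) = (aσ)ν`. -/
instance : Mul (Bimul A) :=
  ⟨fun σ ν =>
    { left := fun a => σ.left (ν.left a)
      right := fun a => ν.right (σ.right a)
      left_add := fun a b => by rw [ν.left_add, σ.left_add]
      right_add := fun a b => by rw [σ.right_add, ν.right_add]
      left_mul := fun a b => by rw [ν.left_mul, σ.left_mul]
      right_mul := fun a b => by rw [σ.right_mul, ν.right_mul]
      middle := fun a b => by rw [σ.middle, ν.middle] }⟩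

/-- The zero bimultiplication. -/
instance : Zero (Bimul A) :=
  ⟨{ left := fun _ => 0
     right := fun _ => 0
     left_add := fun _ _ => by simp
     right_add := fun _ _ => by simp
     left_mul := fun _ _ => by simp
     right_mul := fun _ _ => by simp
     middle := fun _ _ => by simp }⟩

/-- The negative of a bimultiplication. -/
instance : Neg (Bimul A) :=
  ⟨fun σ =>
    { left := fun a => -σ.left a
      right := fun a => -σ.right a
      left_add := fun a b => by rw [σ.left_add]; abel
      right_add := fun a b => by rw [σ.right_add]; abel
      left_mul := fun a b => by rw [σ.left_mul, neg_mul]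
      right_mul := fun a b => by rw [σ.right_mul, mul_neg]
      middle := fun a b => by rw [mul_neg, neg_mul, σ.middle] }⟩

/-- Difference of bimultiplications. -/
instance : Sub (Bimul A) := ⟨fun σ ν => σ + -ν⟩

/-- The identity bimultiplication, whose left and right actions are the identity map. -/
instance : One (Bimul A) :=
  ⟨{ left := id
     right := id
     left_add := fun _ _ => rfl
     right_add := fun _ _ => rfl
     left_mul := fun _ _ => rfl
     right_mul := fun _ _ => rfl
     middle := fun _ _ => rfl }⟩

/-- The inner bimultiplication `μ_c` determined by `c ∈ A`:
`μ_c a = ca`, `a μ_c = ac`. -/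
def inner (c : A) : Bimul A where
  left a := c * a
  right a := a * c
  left_add a b := mul_add c a b
  right_add a b := add_mul a b c
  left_mul a b := (mul_assoc c a b).symm
  right_mul a b := mul_assoc a b c
  middle a b := (mul_assoc a c b).symm

/-- Two bimultiplications `σ`, `ν` are permutable if `σ(aν) = (σa)ν` and
`ν(aσ) = (νa)σ` for all `a`. -/
def Permutable (σ ν : Bimul A) : Prop :=
  (∀ a : A, σ.left (ν.right a) = ν.right (σ.left a)) ∧
  (∀ a : A, ν.left (σ.right a) = σ.right (ν.left a))

end Bimul

/-- The bicenter of `A`: elements annihilated by multiplication on both sides. -/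
def bicenter (A : Type*) [NonUnitalRing A] : Set A :=
  {c | ∀ a : A, c * a = 0 ∧ a * c = 0}

section Obstruction

variable {R A : Type*} [Ring R] [NonUnitalRing A]

/-- `ζ(x,y,z) = f(y,z) − f(x+y,z) + f(x,y+z) − f(x,y)`. -/
def obsζ (f : R → R → A) (x y z : R) : A :=
  f y z - f (x + y) z + f x (y + z) - f x y

/-- `η(x,y) = f(x,y) − f(y,x)`. -/
def obsη (f : R → R → A) (x y : R) : A :=
  f x y - f y x

/-- `α(x,y,z) = σ(x)g(y,z) − g(xy,z) + g(x,yz) − g(x,y)σ(z)`. -/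
def obsα (σ : R → Bimul A) (g : R → R → A) (x y z : R) : A :=
  (σ x).left (g y z) - g (x * y) z + g x (y * z) - (σ z).right (g x y)

/-- `λ(x,y,z) = σ(x)f(y,z) − f(xy,xz) + g(x,y+z) − g(x,y) − g(x,z)`. -/
def obsl (σ : R → Bimul A) (f g : R → R → A) (x y z : R) : A :=
  (σ x).left (f y z) - f (x * y) (x * z) + g x (y + z) - g x y - g x z

/-- `ρ(x,y,z) = f(x,y)σ(z) − f(xz,yz) + g(x+y,z) − g(x,z) − g(y,z)`. -/
def obsρ (σ : R → Bimul A) (f g : R → R → A) (x y z : R) : A :=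
  (σ z).right (f x y) - f (x * z) (y * z) + g (x + y) z - g x z - g y z

end Obstruction

private lemma Bimul.left_sub' {A : Type*} [NonUnitalRing A] (b : Bimul A) (u v : A) :
    b.left (u - v) = b.left u - b.left v := by
  have h := b.left_add (u - v) v
  rw [sub_add_cancel] at h
  exact eq_sub_of_add_eq h.symm

private lemma Bimul.right_sub' {A : Type*} [NonUnitalRing A] (b : Bimul A) (u v : A) :
    b.right (u - v) = b.right u - b.right v := by
  have h := b.right_add (u - v) v
  rw [sub_add_cancel] at h
  exact eq_sub_of_add_eq h.symm

/-- Under the stated hypotheses on `σ`, `f`, `g`, every value of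
the obstruction `(ζ, η, α, λ, ρ)` of `(σ, f, g)` lies in the bicenter `C_A`. -/
theorem obstruction_mem_bicenter (R A : Type*) [Ring R] [NonUnitalRing A]
    (σ : R → Bimul A) (f g : R → R → A)
    (hzero : σ 0 = 0) (hone : σ 1 = 1)
    (hperm : ∀ x y : R, Bimul.Permutable (σ x) (σ y))
    (hf0 : ∀ x : R, f x 0 = 0 ∧ f 0 x = 0)
    (hg0 : ∀ x : R, g x 0 = 0 ∧ g 0 x = 0)
    (hg1 : ∀ x : R, g x 1 = 0 ∧ g 1 x = 0)
    (hadd : ∀ x y : R, σ (x + y) - σ x - σ y = Bimul.inner (f x y))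
    (hmul : ∀ x y : R, σ (x * y) - σ x * σ y = Bimul.inner (g x y)) :
    ∀ x y z : R,
      obsζ f x y z ∈ bicenter A ∧
      obsη f x y ∈ bicenter A ∧
      obsα σ g x y z ∈ bicenter A ∧
      obsl σ f g x y z ∈ bicenter A ∧
      obsρ σ f g x y z ∈ bicenter A := by
  have Fl : ∀ (p q : R) (a : A),
      f p q * a = (σ (p + q)).left a - (σ p).left a - (σ q).left a := by
    intro p q a
    have h : (σ (p + q)).left a + -((σ p).left a) + -((σ q).left a) = f p q * a :=
      congrFun (congrArg Bimul.left (hadd p q)) a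
    rw [← h]; abel
  have Fr : ∀ (p q : R) (a : A),
      a * f p q = (σ (p + q)).right a - (σ p).right a - (σ q).right a := by
    intro p q a
    have h : (σ (p + q)).right a + -((σ p).right a) + -((σ q).right a) = a * f p q :=
      congrFun (congrArg Bimul.right (hadd p q)) a
    rw [← h]; abel
  have Gl : ∀ (p q : R) (a : A),
      g p q * a = (σ (p * q)).left a - (σ p).left ((σ q).left a) := by
    intro p q a
    have h : (σ (p * q)).left a + -((σ p).left ((σ q).left a)) = g p q * a :=
      congrFun (congrArg Bimul.left (hmul p q)) a
    rw [← h]; abel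
  have Gr : ∀ (p q : R) (a : A),
      a * g p q = (σ (p * q)).right a - (σ q).right ((σ p).right a) := by
    intro p q a
    have h : (σ (p * q)).right a + -((σ q).right ((σ p).right a)) = a * g p q :=
      congrFun (congrArg Bimul.right (hmul p q)) a
    rw [← h]; abel
  intro x y z
  refine ⟨fun a => ⟨?_, ?_⟩, fun a => ⟨?_, ?_⟩, fun a => ⟨?_, ?_⟩,
    fun a => ⟨?_, ?_⟩, fun a => ⟨?_, ?_⟩⟩
  · simp only [obsζ, sub_mul, add_mul, Fl]
    rw [show x + y + z = x + (y + z) from add_assoc x y z]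
    abel
  · simp only [obsζ, mul_sub, mul_add, Fr]
    rw [show x + y + z = x + (y + z) from add_assoc x y z]
    abel
  · simp only [obsη, sub_mul, Fl]
    rw [add_comm y x]; abel
  · simp only [obsη, mul_sub, Fr]
    rw [add_comm y x]; abel
  · simp only [obsα, sub_mul, add_mul]
    rw [← Bimul.left_mul, ← Bimul.middle]
    simp only [Gl, Bimul.left_sub']
    rw [show x * y * z = x * (y * z) from mul_assoc x y z]
    abel
  · simp only [obsα, mul_sub, mul_add]
    rw [Bimul.middle, ← Bimul.right_mul]
    simp only [Gr, Bimul.right_sub']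
    rw [show x * y * z = x * (y * z) from mul_assoc x y z]
    abel
  · simp only [obsl, sub_mul, add_mul]
    rw [← Bimul.left_mul]
    simp only [Fl, Gl, Bimul.left_sub']
    rw [show x * (y + z) = x * y + x * z from mul_add x y z]
    abel
  · simp only [obsl, mul_sub, mul_add]
    rw [Bimul.middle]
    simp only [Fr, Gr, Bimul.right_sub']
    rw [show x * (y + z) = x * y + x * z from mul_add x y z]
    abel
  · simp only [obsρ, sub_mul, add_mul]
    rw [← Bimul.middle]
    simp only [Fl, Gl, Bimul.left_sub']
    rw [show (x + y) * z = x * z + y * z from add_mul x y z]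
    abel
  · simp only [obsρ, mul_sub, mul_add]
    rw [← Bimul.right_mul]
    simp only [Fr, Gr, Bimul.right_sub']
    rw [show (x + y) * z = x * z + y * z from add_mul x y z]
    abel
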